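/- Let K be a field with at least 3 elements and let X be a 2×n matrix over K of rank 2 with no zero column, such that the columns of X fall into exactly r parallel classes (two columns are parallel when one is a nonzero scalar multiple of the other) with r ∈ {2,3}, and each parallel class contains at least 2 columns. Then X is self-projecting: there exists λ ∈ (K^*)^n with X·diag(λ)·Xᵀ = 0. -/
import Mathlib


/-- Let `K` be a field with at least 3 elements and `X` a `2 × n`
matrix over `K` of rank 2 with no zero column, whose columns fall into exactly `r`
parallel classes with `r ∈ {2,3}` (recorded by a surjective class map `P` such that
two columns have the same class iff they are parallel), each class containing at
least 2 columns. Then `X` is self-projecting: there exists `λ ∈ (K^*)^n` with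
`X · diag(λ) · Xᵀ = 0`. -/
theorem rank_two_parallel_classes_selfProjecting {K : Type*} [Field K]
    (h3 : ∃ a b c : K, a ≠ b ∧ a ≠ c ∧ b ≠ c)
    {n r : ℕ} (X : Matrix (Fin 2) (Fin n) K) (hrank : X.rank = 2)
    (hnz : ∀ j : Fin n, (fun i => X i j) ≠ 0)
    (hr : r = 2 ∨ r = 3)
    (P : Fin n → Fin r) (hsurj : Function.Surjective P)
    (hpar : ∀ j j' : Fin n, P j = P j' ↔
      ∃ c : K, c ≠ 0 ∧ (fun i => X i j') = c • (fun i => X i j))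
    (hbig : ∀ a : Fin r, 2 ≤ {j : Fin n | P j = a}.ncard) :
    ∃ lam : Fin n → K, (∀ i, lam i ≠ 0) ∧ X * Matrix.diagonal lam * X.transpose = 0 := by
  classical
  -- two nonzero elements summing to any prescribed value
  have pair : ∀ T : K, ∃ u v : K, u ≠ 0 ∧ v ≠ 0 ∧ u + v = T := by
    intro T
    obtain ⟨a, b, c, hab, hac, hbc⟩ := h3
    by_cases h1 : a - c = T
    · exact ⟨b - c, a - b, sub_ne_zero.mpr hbc, sub_ne_zero.mpr hab, by rw [← h1]; ring⟩
    · refine ⟨a - c, T - (a - c), sub_ne_zero.mpr hac, ?_, by ring⟩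
      intro h
      exact h1 (by linear_combination -h)
  -- the fibers of P as finsets
  set S : Fin r → Finset (Fin n) := fun a => Finset.univ.filter (fun j => P j = a) with hS
  have hmem : ∀ a j, j ∈ S a ↔ P j = a := by
    intro a j; simp [hS]
  have hcard : ∀ a, 2 ≤ (S a).card := by
    intro a
    have h := hbig a
    have heq : ({j : Fin n | P j = a} : Set (Fin n)) = ↑(S a) := by
      ext j; simp [hS]
    rwa [heq, Set.ncard_coe_finset] at h
  -- pick two distinct elements in each fiber
  have hex : ∀ a : Fin r, ∃ x y : Fin n, x ∈ S a ∧ y ∈ S a ∧ x ≠ y := by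
    intro a
    obtain ⟨x, hx, y, hy, hxy⟩ := Finset.one_lt_card.mp (lt_of_lt_of_le one_lt_two (hcard a))
    exact ⟨x, y, hx, hy, hxy⟩
  choose j0 j1 hj0 hj1 hne using hex
  -- pick the two special coefficients for each class
  choose u v hu hv huv using fun a => pair (-(((S a).card - 2 : ℕ) : K))
  -- the per-column coefficients (before rescaling by parallelism factors)
  set s : Fin n → K := fun j =>
    if j = j0 (P j) then u (P j) else if j = j1 (P j) then v (P j) else 1 with hsdef
  have hs : ∀ j, s j ≠ 0 := by
    intro j
    simp only [hsdef]
    split_ifs with h1 h2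
    · exact hu _
    · exact hv _
    · exact one_ne_zero
  -- each fiber sum of s vanishes
  have hsum : ∀ a, ∑ j ∈ S a, s j = 0 := by
    intro a
    have h0 : j0 a ∈ S a := hj0 a
    have h1 : j1 a ∈ (S a).erase (j0 a) :=
      Finset.mem_erase.mpr ⟨(hne a).symm, hj1 a⟩
    rw [← Finset.add_sum_erase _ _ h0, ← Finset.add_sum_erase _ _ h1]
    have hrest : ∀ j ∈ ((S a).erase (j0 a)).erase (j1 a), s j = 1 := by
      intro j hj
      have hj1' : j ≠ j1 a := (Finset.mem_erase.mp hj).1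
      have hj' := (Finset.mem_erase.mp hj).2
      have hj0' : j ≠ j0 a := (Finset.mem_erase.mp hj').1
      have hPj : P j = a := (hmem a j).mp (Finset.mem_erase.mp hj').2
      simp only [hsdef, hPj, hj0', hj1', if_false]
    rw [Finset.sum_congr rfl hrest, Finset.sum_const, nsmul_eq_mul, mul_one]
    have hcard' : (((S a).erase (j0 a)).erase (j1 a)).card = (S a).card - 2 := by
      rw [Finset.card_erase_of_mem h1, Finset.card_erase_of_mem h0]
      omega
    have hP0 : P (j0 a) = a := (hmem a _).mp (hj0 a)
    have hP1 : P (j1 a) = a := (hmem a _).mp (hj1 a)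
    have hs0 : s (j0 a) = u a := by simp [hsdef, hP0]
    have hs1 : s (j1 a) = v a := by
      simp [hsdef, hP1, Ne.symm (hne a)]
    rw [hs0, hs1, hcard']
    have := huv a
    linear_combination this
  -- the parallelism factors
  have hrep : ∀ j : Fin n, ∃ c : K, c ≠ 0 ∧
      (fun i => X i j) = c • (fun i => X i (j0 (P j))) := by
    intro j
    have hP0 : P (j0 (P j)) = P j := (hmem (P j) _).mp (hj0 (P j))
    exact (hpar (j0 (P j)) j).mp hP0
  choose cc hcc0 hcol using hrep
  refine ⟨fun j => s j * (cc j * cc j)⁻¹, ?_, ?_⟩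
  · intro j
    exact mul_ne_zero (hs j) (inv_ne_zero (mul_ne_zero (hcc0 j) (hcc0 j)))
  · ext i k
    have hentry : (X * Matrix.diagonal (fun j => s j * (cc j * cc j)⁻¹) * X.transpose) i k
        = ∑ j, X i j * (s j * (cc j * cc j)⁻¹) * X k j := by
      rw [Matrix.mul_apply]
      congr 1
      ext j
      rw [Matrix.mul_diagonal, Matrix.transpose_apply]
    rw [hentry]
    have hterm : ∀ j, X i j * (s j * (cc j * cc j)⁻¹) * X k j
        = s j * (X i (j0 (P j)) * X k (j0 (P j))) := by
      intro j
      have hXi : X i j = cc j * X i (j0 (P j)) := congrFun (hcol j) i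
      have hXk : X k j = cc j * X k (j0 (P j)) := congrFun (hcol j) k
      have hne' : cc j * cc j ≠ 0 := mul_ne_zero (hcc0 j) (hcc0 j)
      rw [hXi, hXk]
      calc cc j * X i (j0 (P j)) * (s j * (cc j * cc j)⁻¹) * (cc j * X k (j0 (P j)))
          = s j * (X i (j0 (P j)) * X k (j0 (P j))) * ((cc j * cc j) * (cc j * cc j)⁻¹) := by
            ring
        _ = s j * (X i (j0 (P j)) * X k (j0 (P j))) := by
            rw [mul_inv_cancel₀ hne', mul_one]
    rw [Finset.sum_congr rfl (fun j _ => hterm j)]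
    rw [← Finset.sum_fiberwise Finset.univ P
      (fun j => s j * (X i (j0 (P j)) * X k (j0 (P j))))]
    rw [Matrix.zero_apply]
    apply Finset.sum_eq_zero
    intro a _
    have : ∀ j ∈ S a, s j * (X i (j0 (P j)) * X k (j0 (P j)))
        = s j * (X i (j0 a) * X k (j0 a)) := by
      intro j hj
      rw [(hmem a j).mp hj]
    calc ∑ j ∈ S a, s j * (X i (j0 (P j)) * X k (j0 (P j)))
        = ∑ j ∈ S a, s j * (X i (j0 a) * X k (j0 a)) := Finset.sum_congr rfl this
      _ = (∑ j ∈ S a, s j) * (X i (j0 a) * X k (j0 a)) := by rw [Finset.sum_mul]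
      _ = 0 := by rw [hsum a, zero_mul]
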